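/- Closed form for the optimal divergence: with the notation of the Pythagorean identity and α ∈ (0,1), D_α(π ‖ π_r^opt) = (1/(α(α−1))) ((Z_r/Z_π)^α − 1), and moreover 0 ≤ Z_r ≤ Z_π (so the divergence is nonnegative). -/

import Mathlib

open MeasureTheory

/-- Closed form for the optimal divergence: for `α ∈ (0,1)`,
`D_α(π‖π_r^opt) = (1/(α(α−1)))((Z_r/Z_π)^α − 1)` and `0 ≤ Z_r ≤ Z_π`. -/
theorem optimal_divergence_closed_form
    {d r : ℕ} (μ : Measure (Fin d → ℝ)) [IsProbabilityMeasure μ]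
    (ℓ : (Fin d → ℝ) → ℝ) (φr : (Fin d → ℝ) → (Fin r → ℝ)) (hφ : Measurable φr)
    (hℓ_int : Integrable ℓ μ) (hℓ_pos : ∀ x, 0 < ℓ x)
    (α : ℝ) (hα : α ∈ Set.Ioo (0:ℝ) 1)
    (Zπ : ℝ) (hZπ : Zπ = ∫ x, ℓ x ∂μ) (hZπ_pos : 0 < Zπ)
    (m : MeasurableSpace (Fin d → ℝ))
    (hm : m = MeasurableSpace.comap φr inferInstance)
    (Lopt : (Fin d → ℝ) → ℝ)
    (hLopt : Lopt = fun x => (condExp m μ (fun y => ℓ y ^ α) x) ^ (1/α))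
    (hLopt_int : Integrable Lopt μ)
    (Zr : ℝ) (hZr : Zr = ∫ x, Lopt x ∂μ)
    (D : ((Fin d → ℝ) → ℝ) → ((Fin d → ℝ) → ℝ) → ℝ)
    (hD : D = fun p q => (1 / (α * (α - 1))) * ((∫ x, (p x / q x) ^ α * q x ∂μ) - 1))
    (hint : Integrable
      (fun x => ((ℓ x / Zπ) / (Lopt x / Zr)) ^ α * (Lopt x / Zr)) μ) :
    D (fun x => ℓ x / Zπ) (fun x => Lopt x / Zr)
        = (1 / (α * (α - 1))) * ((Zr / Zπ) ^ α - 1) ∧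
    0 ≤ Zr ∧ Zr ≤ Zπ := by
  obtain ⟨hα0, hα1⟩ := hα
  have hαne : α ≠ 0 := ne_of_gt hα0
  have h1α : (0:ℝ) < 1 - α := by linarith
  have hm_le : m ≤ (MeasurableSpace.pi : MeasurableSpace (Fin d → ℝ)) :=
    hm ▸ hφ.comap_le
  haveI : SigmaFinite (μ.trim hm_le) := inferInstance
  set c : (Fin d → ℝ) → ℝ := condExp m μ (fun y => ℓ y ^ α) with hc
  have hc_nonneg : 0 ≤ᵐ[μ] c :=
    condExp_nonneg (Filter.Eventually.of_forall fun x => Real.rpow_nonneg (hℓ_pos x).le α)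
  have hℓα_aesm : AEStronglyMeasurable[MeasurableSpace.pi] (fun x => ℓ x ^ α) μ :=
    (Real.continuous_rpow_const hα0.le).comp_aestronglyMeasurable hℓ_int.aestronglyMeasurable
  have hℓα_int : Integrable (fun x => ℓ x ^ α) μ := by
    refine Integrable.mono' ((integrable_const (1:ℝ)).add hℓ_int) hℓα_aesm ?_
    refine Filter.Eventually.of_forall fun x => ?_
    rw [Real.norm_eq_abs, abs_of_nonneg (Real.rpow_nonneg (hℓ_pos x).le α)]
    rcases le_or_gt (ℓ x) 1 with h | h
    · have := Real.rpow_le_one (hℓ_pos x).le h hα0.le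
      have := hℓ_pos x; simp only [Pi.add_apply]; linarith
    · have h2 : ℓ x ^ α ≤ ℓ x ^ (1:ℝ) :=
        Real.rpow_le_rpow_of_exponent_le h.le hα1.le
      rw [Real.rpow_one] at h2; simp only [Pi.add_apply]; linarith
  set g : (Fin d → ℝ) → ℝ := fun x => c x ^ ((1-α)/α) with hg
  have hg_sm : StronglyMeasurable[m] g :=
    (Real.continuous_rpow_const (by positivity)).comp_stronglyMeasurable
      stronglyMeasurable_condExp
  set F : (Fin d → ℝ) → ℝ := fun x => ℓ x ^ α * Lopt x ^ (1 - α) with hF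
  have hLopt_nonneg_ae : 0 ≤ᵐ[μ] Lopt := by
    filter_upwards [hc_nonneg] with x hx
    rw [hLopt]; exact Real.rpow_nonneg hx _
  have hA : (fun x => g x * ℓ x ^ α) =ᵐ[μ] F := by
    filter_upwards [hc_nonneg] with x hx
    have hexp : (1/α) * (1-α) = (1-α)/α := by field_simp
    simp only [hF, hLopt, hg]
    rw [← Real.rpow_mul hx, hexp, mul_comm]
  have hB : (fun x => g x * c x) =ᵐ[μ] Lopt := by
    filter_upwards [hc_nonneg] with x hx
    rw [hLopt]; simp only [hg]
    rcases eq_or_lt_of_le (show (0:ℝ) ≤ c x from hx) with h0 | hpos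
    · rw [← h0, mul_zero, Real.zero_rpow (one_div_ne_zero hαne)]
    · have hexp : (1-α)/α + 1 = 1/α := by field_simp; ring
      calc c x ^ ((1-α)/α) * c x = c x ^ ((1-α)/α) * c x ^ (1:ℝ) := by
            rw [Real.rpow_one]
        _ = c x ^ ((1-α)/α + 1) := (Real.rpow_add hpos _ _).symm
        _ = c x ^ (1/α) := by rw [hexp]
  have hyoung : ∀ᵐ x ∂μ, F x ≤ α * ℓ x + (1-α) * Lopt x := by
    filter_upwards [hLopt_nonneg_ae] with x hx
    exact Real.geom_mean_le_arith_mean2_weighted hα0.le h1α.le (hℓ_pos x).le hx (by ring)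
  have hF_nonneg : 0 ≤ᵐ[μ] F := by
    filter_upwards [hLopt_nonneg_ae] with x hx
    exact mul_nonneg (Real.rpow_nonneg (hℓ_pos x).le _) (Real.rpow_nonneg hx _)
  have hF_aesm : AEStronglyMeasurable[MeasurableSpace.pi] F μ :=
    hℓα_aesm.mul ((Real.continuous_rpow_const h1α.le).comp_aestronglyMeasurable
      hLopt_int.aestronglyMeasurable)
  have hbound_int : Integrable (fun x => α * ℓ x + (1-α) * Lopt x) μ :=
    (hℓ_int.const_mul α).add (hLopt_int.const_mul (1-α))
  have hF_int : Integrable F μ := by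
    refine hbound_int.mono' hF_aesm ?_
    filter_upwards [hyoung, hF_nonneg] with x h1 h2
    rw [Real.norm_eq_abs, abs_of_nonneg h2]; exact h1
  have hgℓ_int : Integrable (fun x => g x * ℓ x ^ α) μ := hF_int.congr hA.symm
  have hpullout : condExp m μ (fun x => g x * ℓ x ^ α) =ᵐ[μ] fun x => g x * c x := by
    have := condExp_mul_of_stronglyMeasurable_left hg_sm hgℓ_int hℓα_int
    exact this
  have hkey : ∫ x, F x ∂μ = Zr := by
    rw [← integral_congr_ae hA, ← integral_condExp (f := fun x => g x * ℓ x ^ α) hm_le,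
      integral_congr_ae hpullout, integral_congr_ae hB, hZr]
  have hZr_nonneg : 0 ≤ Zr := hZr ▸ integral_nonneg_of_ae hLopt_nonneg_ae
  have hlα_pos : 0 < ∫ x, ℓ x ^ α ∂μ := by
    rw [integral_pos_iff_support_of_nonneg
      (fun x => Real.rpow_nonneg (hℓ_pos x).le α) hℓα_int]
    have hsupp : Function.support (fun x => ℓ x ^ α) = Set.univ :=
      Set.eq_univ_of_forall fun x => (Real.rpow_pos_of_pos (hℓ_pos x) α).ne'
    rw [hsupp, measure_univ]; norm_num
  have hZr_pos : 0 < Zr := by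
    rcases hZr_nonneg.lt_or_eq with h | h
    · exact h
    · exfalso
      have hL0 : Lopt =ᵐ[μ] 0 :=
        (integral_eq_zero_iff_of_nonneg_ae hLopt_nonneg_ae hLopt_int).mp (hZr ▸ h.symm)
      have hc0 : c =ᵐ[μ] 0 := by
        filter_upwards [hL0, hc_nonneg] with x h1 h2
        have : c x ^ (1/α) = 0 := by
          have := h1; rw [hLopt] at this; simpa using this
        exact (Real.rpow_eq_zero h2 (one_div_ne_zero hαne)).mp this
      have h1 : ∫ x, c x ∂μ = 0 := by
        rw [integral_congr_ae hc0]; simp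
      have h2 : ∫ x, c x ∂μ = ∫ x, ℓ x ^ α ∂μ := integral_condExp hm_le
      rw [h2] at h1
      exact hlα_pos.ne' h1
  have hCONST : (fun x => ((ℓ x / Zπ) / (Lopt x / Zr)) ^ α * (Lopt x / Zr))
      =ᵐ[μ] fun x => (Zr ^ (α-1) / Zπ ^ α) * F x := by
    filter_upwards [hLopt_nonneg_ae] with x hx
    rcases eq_or_lt_of_le hx with h0 | hpos
    · simp [hF, ← h0, Real.zero_rpow hαne, Real.zero_rpow h1α.ne']
    · have hℓx := hℓ_pos x
      have hℓαpos : (0:ℝ) < ℓ x ^ α := Real.rpow_pos_of_pos hℓx α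
      have hLαpos : (0:ℝ) < Lopt x ^ α := Real.rpow_pos_of_pos hpos α
      have hZπα : (0:ℝ) < Zπ ^ α := Real.rpow_pos_of_pos hZπ_pos α
      have hZrα : (0:ℝ) < Zr ^ α := Real.rpow_pos_of_pos hZr_pos α
      rw [Real.div_rpow (div_nonneg hℓx.le hZπ_pos.le) (div_nonneg hpos.le hZr_pos.le),
        Real.div_rpow hℓx.le hZπ_pos.le, Real.div_rpow hpos.le hZr_pos.le]
      simp only [hF]
      rw [Real.rpow_sub hpos, Real.rpow_sub hZr_pos, Real.rpow_one, Real.rpow_one]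
      field_simp
  have hI : ∫ x, ((ℓ x / Zπ) / (Lopt x / Zr)) ^ α * (Lopt x / Zr) ∂μ = (Zr/Zπ)^α := by
    rw [integral_congr_ae hCONST, integral_const_mul, hkey,
      Real.div_rpow hZr_nonneg hZπ_pos.le, Real.rpow_sub hZr_pos, Real.rpow_one]
    field_simp
  refine ⟨?_, hZr_nonneg, ?_⟩
  · rw [hD]; simp only
    rw [hI]
  · have hmono := integral_mono_ae hF_int hbound_int hyoung
    rw [hkey, integral_add (hℓ_int.const_mul α) (hLopt_int.const_mul (1-α)),
      integral_const_mul, integral_const_mul, ← hZπ, ← hZr] at hmono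
    nlinarith
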